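/- arXiv:2502.08202 — 9 statements merged into one kernel-verified Lean document; each statement's English description precedes it below -/
import Mathlib

section
/- Advanced joint convexity: for λ ∈ [0,1], κ > 1, and distributions P, Q, one has H_κ((1−λ)Q + λP ‖ Q) = λ · H_{κ'}(P‖Q), where κ' = 1 + (κ−1)/λ. -/
open MeasureTheory

/-- Advanced joint convexity: `H_κ((1−λ)Q + λP ‖ Q) = λ · H_{κ'}(P‖Q)` with
`κ' = 1 + (κ−1)/λ`. -/
theorem advanced_joint_convexity {Ω : Type*} [MeasurableSpace Ω] (μ : Measure Ω)
    (p q : Ω → ℝ) (κ lam : ℝ) (hκ : 1 < κ) (hl0 : 0 ≤ lam) (hl1 : lam ≤ 1)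
    (hp : ∀ ω, 0 ≤ p ω) (hq : ∀ ω, 0 ≤ q ω)
    (hp1 : ∫ ω, p ω ∂μ = 1) (hq1 : ∫ ω, q ω ∂μ = 1) :
    ∫ ω, max (((1 - lam) * q ω + lam * p ω) - κ * q ω) 0 ∂μ
      = lam * ∫ ω, max (p ω - (1 + (κ - 1) / lam) * q ω) 0 ∂μ := by
  rcases eq_or_lt_of_le hl0 with h0 | h0
  · -- lam = 0
    have : ∀ ω, max (((1 - lam) * q ω + lam * p ω) - κ * q ω) 0 = 0 := by
      intro ω
      rw [← h0]
      have : (1 - (0:ℝ)) * q ω + 0 * p ω - κ * q ω = (1 - κ) * q ω := by ring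
      rw [this, max_eq_right]
      exact mul_nonpos_of_nonpos_of_nonneg (by linarith) (hq ω)
    simp_rw [this, integral_zero, ← h0, zero_mul]
  · -- lam > 0
    have key : ∀ ω, max (((1 - lam) * q ω + lam * p ω) - κ * q ω) 0
        = lam * max (p ω - (1 + (κ - 1) / lam) * q ω) 0 := by
      intro ω
      have h1 : ((1 - lam) * q ω + lam * p ω) - κ * q ω
          = lam * (p ω - (1 + (κ - 1) / lam) * q ω) := by
        field_simp
        ring
      rw [h1, max_eq_iff]
      rcases le_or_gt (p ω - (1 + (κ - 1) / lam) * q ω) 0 with h | h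
      · right
        constructor
        · rw [max_eq_right h, mul_zero]
        · exact mul_nonpos_of_nonneg_of_nonpos hl0 h
      · left
        constructor
        · rw [max_eq_left h.le]
        · exact mul_nonneg hl0 h.le
    simp_rw [key]
    exact MeasureTheory.integral_const_mul lam _
end

section
/- For λ ∈ [0,1], κ > 1 with κ ≤ 1/(1−λ), and distributions P, Q, H_κ(P ‖ (1−λ)P + λQ) = β · H_{κ''}(P‖Q), where β = 1 − κ + κλ and κ'' = 1 + (κ−1)/(1−κ+κλ); and if κ > 1/(1−λ) then H_κ(P ‖ (1−λ)P + λQ) = 0. -/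
open MeasureTheory

/-- `H_κ(P ‖ (1−λ)P + λQ)` equals `β · H_{κ''}(P‖Q)` when `κ ≤ 1/(1−λ)`
(equivalently `κ(1−λ) ≤ 1`), and vanishes when `κ > 1/(1−λ)`. -/
theorem advanced_joint_convexity_add {Ω : Type*} [MeasurableSpace Ω] (μ : Measure Ω)
    (p q : Ω → ℝ) (κ lam : ℝ) (hκ : 1 < κ) (hl0 : 0 ≤ lam) (hl1 : lam ≤ 1)
    (hp : ∀ ω, 0 ≤ p ω) (hq : ∀ ω, 0 ≤ q ω)
    (hp1 : ∫ ω, p ω ∂μ = 1) (hq1 : ∫ ω, q ω ∂μ = 1) :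
    (κ * (1 - lam) ≤ 1 →
      ∫ ω, max (p ω - κ * ((1 - lam) * p ω + lam * q ω)) 0 ∂μ
        = (1 - κ + κ * lam) *
            ∫ ω, max (p ω - (1 + (κ - 1) / (1 - κ + κ * lam)) * q ω) 0 ∂μ)
    ∧ (1 < κ * (1 - lam) →
      ∫ ω, max (p ω - κ * ((1 - lam) * p ω + lam * q ω)) 0 ∂μ = 0) := by
  set β := 1 - κ + κ * lam with hβ
  have hkey : ∀ ω, p ω - κ * ((1 - lam) * p ω + lam * q ω) = β * p ω - κ * lam * q ω := by
    intro ω; ring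
  constructor
  · intro hle
    have hβ0 : 0 ≤ β := by nlinarith
    rcases eq_or_lt_of_le hβ0 with h0 | hpos
    · -- β = 0, then κ*lam = κ - 1 > 0
      have hkl : κ * lam = κ - 1 := by linarith [h0.symm]
      have : ∀ ω, max (p ω - κ * ((1 - lam) * p ω + lam * q ω)) 0 = 0 := by
        intro ω
        rw [hkey ω, ← h0]
        have : κ * lam * q ω ≥ 0 := mul_nonneg (mul_nonneg (by linarith) hl0) (hq ω)
        simp only [zero_mul, zero_sub]
        exact max_eq_right (by linarith)
      rw [show (∫ ω, max (p ω - κ * ((1 - lam) * p ω + lam * q ω)) 0 ∂μ)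
          = ∫ _ : Ω, (0:ℝ) ∂μ from integral_congr_ae (Filter.Eventually.of_forall fun ω => this ω),
        integral_zero, ← h0, zero_mul]
    · have hβne : β ≠ 0 := ne_of_gt hpos
      have hcoef : 1 + (κ - 1) / β = κ * lam / β := by
        field_simp; ring
      have hpt : ∀ ω, max (p ω - κ * ((1 - lam) * p ω + lam * q ω)) 0
          = β * max (p ω - (1 + (κ - 1) / β) * q ω) 0 := by
        intro ω
        rw [hkey ω, hcoef]
        rw [show β * p ω - κ * lam * q ω = β * (p ω - κ * lam / β * q ω) by
          field_simp]
        rw [mul_max_of_nonneg _ _ (le_of_lt hpos), mul_zero]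
      calc ∫ ω, max (p ω - κ * ((1 - lam) * p ω + lam * q ω)) 0 ∂μ
          = ∫ ω, β * max (p ω - (1 + (κ - 1) / β) * q ω) 0 ∂μ :=
            integral_congr_ae (Filter.Eventually.of_forall hpt)
        _ = β * ∫ ω, max (p ω - (1 + (κ - 1) / β) * q ω) 0 ∂μ := by rw [← smul_eq_mul, ← integral_smul]; simp [smul_eq_mul]
  · intro hgt
    have hβneg : β < 0 := by nlinarith
    have : ∀ ω, max (p ω - κ * ((1 - lam) * p ω + lam * q ω)) 0 = 0 := by
      intro ω
      rw [hkey ω]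
      refine max_eq_right ?_
      have h1 : β * p ω ≤ 0 := mul_nonpos_of_nonpos_of_nonneg (le_of_lt hβneg) (hp ω)
      have h2 : 0 ≤ κ * lam * q ω := mul_nonneg (mul_nonneg (by linarith) hl0) (hq ω)
      linarith
    rw [show (∫ ω, max (p ω - κ * ((1 - lam) * p ω + lam * q ω)) 0 ∂μ)
        = ∫ _ : Ω, (0:ℝ) ∂μ from integral_congr_ae (Filter.Eventually.of_forall fun ω => this ω),
      integral_zero]
end

section
/- Monotonicity of mixtures in the hockey-stick divergence: for 0 ≤ λ ≤ λ' ≤ 1, distributions P₀, P₁, and any κ ≥ 0, writing Q_λ := (1−λ)P₀ + λP₁, one has H_κ(Q_{λ'} ‖ P₁) ≤ H_κ(Q_λ ‖ P₁) and H_κ(P₁ ‖ Q_{λ'}) ≤ H_κ(P₁ ‖ Q_λ). -/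
open MeasureTheory

lemma hs_mix_aux {Ω : Type*} [MeasurableSpace Ω] (μ : Measure Ω)
    (f p₁ : Ω → ℝ) (κ t : ℝ) (ht0 : 0 ≤ t) (ht1 : t ≤ 1)
    (hp₁ : ∀ ω, 0 ≤ p₁ ω) (hp₁1 : ∫ ω, p₁ ω ∂μ = 1) (hint₁ : Integrable p₁ μ)
    (hf : Integrable f μ) (hfint : ∫ ω, f ω ∂μ = 1 - κ) :
    ∫ ω, max (t * f ω + (1 - t) * ((1 - κ) * p₁ ω)) 0 ∂μ
      ≤ ∫ ω, max (f ω) 0 ∂μ := by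
  set H := ∫ ω, max (f ω) 0 ∂μ with hH
  have hfpos : Integrable (fun ω => max (f ω) 0) μ := hf.pos_part
  have hH0 : 0 ≤ H := integral_nonneg fun ω => le_max_right _ _
  have hH1 : 1 - κ ≤ H := by
    rw [← hfint]
    exact integral_mono hf hfpos fun ω => le_max_left _ _
  have hmaxH : max (1 - κ) 0 ≤ H := max_le hH1 hH0
  have hginteg : Integrable (fun ω => t * f ω + (1 - t) * ((1 - κ) * p₁ ω)) μ := by
    have h2 : Integrable (fun ω => ((1 - t) * (1 - κ)) * p₁ ω) μ := hint₁.const_mul _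
    simpa [mul_assoc, Pi.add_def] using (hf.const_mul t).add h2
  have hRint : Integrable (fun ω => t * max (f ω) 0 + (1 - t) * (max (1 - κ) 0 * p₁ ω)) μ :=
    (hfpos.const_mul t).add ((hint₁.const_mul _).const_mul _)
  have hpw : ∀ ω, max (t * f ω + (1 - t) * ((1 - κ) * p₁ ω)) 0
      ≤ t * max (f ω) 0 + (1 - t) * (max (1 - κ) 0 * p₁ ω) := by
    intro ω
    have h1t : 0 ≤ 1 - t := by linarith
    have hb : (1 - κ) * p₁ ω ≤ max (1 - κ) 0 * p₁ ω :=
      mul_le_mul_of_nonneg_right (le_max_left _ _) (hp₁ ω)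
    refine max_le ?_ ?_
    · have := mul_le_mul_of_nonneg_left (le_max_left (f ω) 0) ht0
      nlinarith
    · have h1 : 0 ≤ t * max (f ω) 0 := mul_nonneg ht0 (le_max_right _ _)
      have h2 : 0 ≤ (1 - t) * (max (1 - κ) 0 * p₁ ω) :=
        mul_nonneg h1t (mul_nonneg (le_max_right _ _) (hp₁ ω))
      linarith
  calc ∫ ω, max (t * f ω + (1 - t) * ((1 - κ) * p₁ ω)) 0 ∂μ
      ≤ ∫ ω, (t * max (f ω) 0 + (1 - t) * (max (1 - κ) 0 * p₁ ω)) ∂μ :=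
        integral_mono hginteg.pos_part hRint hpw
    _ = t * H + (1 - t) * max (1 - κ) 0 := by
        rw [integral_add (hfpos.const_mul t) ((hint₁.const_mul (max (1 - κ) 0)).const_mul (1 - t)),
          integral_const_mul, integral_const_mul, integral_const_mul, hp₁1, mul_one]
    _ ≤ H := by nlinarith

/-- Monotonicity of mixtures in the hockey-stick divergence: with
`Q_λ := (1−λ)P₀ + λP₁`, both `H_κ(Q_{λ'}‖P₁) ≤ H_κ(Q_λ‖P₁)` and
`H_κ(P₁‖Q_{λ'}) ≤ H_κ(P₁‖Q_λ)` for `λ ≤ λ'`. -/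
theorem hockey_stick_mixture_monotone {Ω : Type*} [MeasurableSpace Ω] (μ : Measure Ω)
    (p₀ p₁ : Ω → ℝ) (κ lam lam' : ℝ) (hκ : 0 ≤ κ)
    (hl0 : 0 ≤ lam) (hll : lam ≤ lam') (hl1 : lam' ≤ 1)
    (hp₀ : ∀ ω, 0 ≤ p₀ ω) (hp₁ : ∀ ω, 0 ≤ p₁ ω)
    (hp₀1 : ∫ ω, p₀ ω ∂μ = 1) (hp₁1 : ∫ ω, p₁ ω ∂μ = 1)
    (hint₀ : Integrable p₀ μ) (hint₁ : Integrable p₁ μ) :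
    (∫ ω, max (((1 - lam') * p₀ ω + lam' * p₁ ω) - κ * p₁ ω) 0 ∂μ
        ≤ ∫ ω, max (((1 - lam) * p₀ ω + lam * p₁ ω) - κ * p₁ ω) 0 ∂μ)
    ∧ (∫ ω, max (p₁ ω - κ * ((1 - lam') * p₀ ω + lam' * p₁ ω)) 0 ∂μ
        ≤ ∫ ω, max (p₁ ω - κ * ((1 - lam) * p₀ ω + lam * p₁ ω)) 0 ∂μ) := by
  rcases eq_or_lt_of_le (hll.trans hl1) with h1 | h1
  · -- lam = 1, hence lam' = 1
    have h2 : lam' = 1 := le_antisymm hl1 (h1 ▸ hll)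
    rw [← h1, h2, h1]
    exact ⟨le_refl _, le_refl _⟩
  · set t : ℝ := (1 - lam') / (1 - lam) with ht
    have hd : (0:ℝ) < 1 - lam := by linarith
    have ht0 : 0 ≤ t := div_nonneg (by linarith) hd.le
    have ht1 : t ≤ 1 := (div_le_one hd).mpr (by linarith)
    have htl : t * (1 - lam) = 1 - lam' := div_mul_cancel₀ _ hd.ne'
    constructor
    · -- part 1
      set f : Ω → ℝ := fun ω => ((1 - lam) * p₀ ω + lam * p₁ ω) - κ * p₁ ω with hfdef
      have hfI : Integrable f μ :=
        ((hint₀.const_mul _).add (hint₁.const_mul _)).sub (hint₁.const_mul _)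
      have hfint : ∫ ω, f ω ∂μ = 1 - κ := by
        rw [hfdef]
        have hQI : Integrable (fun ω => (1 - lam) * p₀ ω + lam * p₁ ω) μ :=
          (hint₀.const_mul _).add (hint₁.const_mul _)
        rw [integral_sub hQI (hint₁.const_mul κ),
          integral_add (hint₀.const_mul (1 - lam)) (hint₁.const_mul lam),
          integral_const_mul, integral_const_mul, integral_const_mul, hp₀1, hp₁1]
        ring
      have key := hs_mix_aux μ f p₁ κ t ht0 ht1 hp₁ hp₁1 hint₁ hfI hfint
      have heq : ∀ ω, ((1 - lam') * p₀ ω + lam' * p₁ ω) - κ * p₁ ω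
          = t * f ω + (1 - t) * ((1 - κ) * p₁ ω) := by
        intro ω
        simp only [hfdef]
        have hl' : lam' = 1 - t * (1 - lam) := by rw [htl]; ring
        rw [hl']; ring
      calc ∫ ω, max (((1 - lam') * p₀ ω + lam' * p₁ ω) - κ * p₁ ω) 0 ∂μ
          = ∫ ω, max (t * f ω + (1 - t) * ((1 - κ) * p₁ ω)) 0 ∂μ := by
            congr 1; funext ω; rw [heq]
        _ ≤ ∫ ω, max (f ω) 0 ∂μ := key
    · -- part 2
      set f : Ω → ℝ := fun ω => p₁ ω - κ * ((1 - lam) * p₀ ω + lam * p₁ ω) with hfdef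
      have hQI : Integrable (fun ω => (1 - lam) * p₀ ω + lam * p₁ ω) μ :=
        (hint₀.const_mul _).add (hint₁.const_mul _)
      have hfI : Integrable f μ := hint₁.sub (hQI.const_mul κ)
      have hfint : ∫ ω, f ω ∂μ = 1 - κ := by
        rw [hfdef]
        rw [integral_sub hint₁ (hQI.const_mul κ), integral_const_mul,
          integral_add (hint₀.const_mul (1 - lam)) (hint₁.const_mul lam),
          integral_const_mul, integral_const_mul, hp₀1, hp₁1]
        ring
      have key := hs_mix_aux μ f p₁ κ t ht0 ht1 hp₁ hp₁1 hint₁ hfI hfint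
      have heq : ∀ ω, p₁ ω - κ * ((1 - lam') * p₀ ω + lam' * p₁ ω)
          = t * f ω + (1 - t) * ((1 - κ) * p₁ ω) := by
        intro ω
        simp only [hfdef]
        have hl' : lam' = 1 - t * (1 - lam) := by rw [htl]; ring
        rw [hl']; ring
      calc ∫ ω, max (p₁ ω - κ * ((1 - lam') * p₀ ω + lam' * p₁ ω)) 0 ∂μ
          = ∫ ω, max (t * f ω + (1 - t) * ((1 - κ) * p₁ ω)) 0 ∂μ := by
            congr 1; funext ω; rw [heq]
        _ ≤ ∫ ω, max (f ω) 0 ∂μ := key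
end

section
/- If the Rényi divergence of order α > 1 satisfies D_α(P‖Q) ≤ ρ, then for any ε > 0, H_{e^ε}(P‖Q) ≤ (1/(α−1)) · e^{(α−1)(ρ−ε)} · (1 − 1/α)^α. -/
open MeasureTheory

lemma key_scalar (α ε : ℝ) (hα : 1 < α) (x : ℝ) (hx : 0 ≤ x) :
    x - Real.exp ε ≤ (α - 1)⁻¹ * Real.exp (-(α - 1) * ε) * (1 - 1 / α) ^ α * x ^ α := by
  have hα1 : 0 < α - 1 := by linarith
  have hα0 : 0 < α := by linarith
  set K : ℝ := (α - 1)⁻¹ * Real.exp (-(α - 1) * ε) * (1 - 1 / α) ^ α with hKdef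
  set c : ℝ := α / (α - 1) * Real.exp ε with hcdef
  have hc : 0 < c := by positivity
  have hbase : (1 : ℝ) - 1 / α = (α - 1) / α := by field_simp
  -- identity I1 : K * c ^ α = (α - 1)⁻¹ * exp ε
  have hI1 : K * c ^ α = (α - 1)⁻¹ * Real.exp ε := by
    have h1 : c ^ α = (α / (α - 1)) ^ α * Real.exp (ε * α) := by
      rw [hcdef, Real.mul_rpow (by positivity) (Real.exp_pos _).le, ← Real.exp_mul]
    have h2 : (1 - 1 / α) ^ α * (α / (α - 1)) ^ α = 1 := by
      rw [hbase, ← Real.mul_rpow (by positivity) (by positivity)]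
      rw [div_mul_div_comm, mul_comm]
      rw [div_self (by positivity), Real.one_rpow]
    rw [hKdef, h1]
    calc (α - 1)⁻¹ * Real.exp (-(α - 1) * ε) * (1 - 1 / α) ^ α *
          ((α / (α - 1)) ^ α * Real.exp (ε * α))
        = (α - 1)⁻¹ * ((1 - 1 / α) ^ α * (α / (α - 1)) ^ α) *
          (Real.exp (-(α - 1) * ε) * Real.exp (ε * α)) := by ring
      _ = (α - 1)⁻¹ * Real.exp ε := by
          rw [h2, ← Real.exp_add]
          norm_num
          exact Or.inl (by ring)
  -- Bernoulli at s = x / c - 1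
  have hs : (-1 : ℝ) ≤ x / c - 1 := by
    have : 0 ≤ x / c := by positivity
    linarith
  have hB := one_add_mul_self_le_rpow_one_add hs hα.le
  have hxc : (1 : ℝ) + (x / c - 1) = x / c := by ring
  rw [hxc] at hB
  have hdiv : (x / c) ^ α = x ^ α / c ^ α := Real.div_rpow hx hc.le α
  rw [hdiv] at hB
  -- multiply by K * c ^ α > 0
  have hKc : 0 < K * c ^ α := by
    rw [hI1]; positivity
  have := mul_le_mul_of_nonneg_left hB hKc.le
  have hcα : (0:ℝ) < c ^ α := Real.rpow_pos_of_pos hc _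
  have hfin : K * c ^ α * (1 + α * (x / c - 1)) = x - Real.exp ε := by
    have hI2 : α * (K * c ^ α) = c := by
      rw [hI1, hcdef]; field_simp
    have : K * c ^ α * (1 + α * (x / c - 1)) =
        K * c ^ α * (1 - α) + (α * (K * c ^ α)) * (x / c) := by ring
    rw [this, hI2, hI1]
    field_simp
    ring
  have hrhs : K * c ^ α * (x ^ α / c ^ α) = K * x ^ α := by
    field_simp
  rw [hfin, hrhs] at this
  exact this

/-- Rényi divergence bounds the hockey-stick divergence: if `D_α(P‖Q) ≤ ρ` then
`H_{e^ε}(P‖Q) ≤ (1/(α−1)) e^{(α−1)(ρ−ε)} (1 − 1/α)^α`. -/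
theorem renyi_to_hockey_stick {Ω : Type*} [MeasurableSpace Ω] (μ : Measure Ω)
    (p q : Ω → ℝ) (α ρ ε : ℝ) (hα : 1 < α) (hε : 0 < ε)
    (hp : ∀ ω, 0 ≤ p ω) (hq : ∀ ω, 0 < q ω)
    (hp1 : ∫ ω, p ω ∂μ = 1) (hq1 : ∫ ω, q ω ∂μ = 1)
    (hint : Integrable (fun ω => q ω * (p ω / q ω) ^ α) μ)
    (hρ : (α - 1)⁻¹ * Real.log (∫ ω, q ω * (p ω / q ω) ^ α ∂μ) ≤ ρ) :
    ∫ ω, max (p ω - Real.exp ε * q ω) 0 ∂μ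
      ≤ (α - 1)⁻¹ * Real.exp ((α - 1) * (ρ - ε)) * (1 - 1 / α) ^ α := by
  have hα1 : 0 < α - 1 := by linarith
  have hα0 : 0 < α := by linarith
  set K : ℝ := (α - 1)⁻¹ * Real.exp (-(α - 1) * ε) * (1 - 1 / α) ^ α with hKdef
  have hbase : (0:ℝ) < 1 - 1 / α := by
    rw [sub_pos, div_lt_one hα0]; exact hα
  have hKpos : 0 < K := by positivity
  -- pointwise bound
  have hpt : ∀ ω, max (p ω - Real.exp ε * q ω) 0 ≤ K * (q ω * (p ω / q ω) ^ α) := by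
    intro ω
    have hqω := hq ω
    have hxα : (0:ℝ) ≤ (p ω / q ω) ^ α :=
      Real.rpow_nonneg (div_nonneg (hp ω) hqω.le) _
    have hKx : (0:ℝ) ≤ K * (q ω * (p ω / q ω) ^ α) :=
      mul_nonneg hKpos.le (mul_nonneg hqω.le hxα)
    rw [max_le_iff]
    refine ⟨?_, hKx⟩
    have hkey := key_scalar α ε hα (p ω / q ω) (div_nonneg (hp ω) hqω.le)
    have := mul_le_mul_of_nonneg_left hkey hqω.le
    calc p ω - Real.exp ε * q ω = q ω * (p ω / q ω - Real.exp ε) := by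
          field_simp
      _ ≤ q ω * (K * (p ω / q ω) ^ α) := this
      _ = K * (q ω * (p ω / q ω) ^ α) := by ring
  -- integrability of p and q
  have hpint : Integrable p μ := by
    by_contra h
    rw [integral_undef h] at hp1
    exact one_ne_zero hp1.symm
  have hqint : Integrable q μ := by
    by_contra h
    rw [integral_undef h] at hq1
    exact one_ne_zero hq1.symm
  have hint2 : Integrable (fun ω => K * (q ω * (p ω / q ω) ^ α)) μ :=
    hint.const_mul K
  have hmax_int : Integrable (fun ω => max (p ω - Real.exp ε * q ω) 0) μ := by
    refine hint2.mono ?_ (Filter.Eventually.of_forall fun ω => ?_)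
    · exact ((hpint.sub (hqint.const_mul _)).aestronglyMeasurable.sup
        aestronglyMeasurable_const)
    · have h0 : 0 ≤ max (p ω - Real.exp ε * q ω) 0 := le_max_right _ _
      rw [Real.norm_eq_abs, Real.norm_eq_abs, abs_of_nonneg h0]
      calc max (p ω - Real.exp ε * q ω) 0 ≤ K * (q ω * (p ω / q ω) ^ α) := hpt ω
        _ ≤ |K * (q ω * (p ω / q ω) ^ α)| := le_abs_self _
  -- integrate
  have hmono : ∫ ω, max (p ω - Real.exp ε * q ω) 0 ∂μ
      ≤ ∫ ω, K * (q ω * (p ω / q ω) ^ α) ∂μ :=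
    integral_mono hmax_int hint2 hpt
  rw [integral_const_mul] at hmono
  have hI : ∫ ω, q ω * (p ω / q ω) ^ α ∂μ ≤ Real.exp ((α - 1) * ρ) := by
    set I := ∫ ω, q ω * (p ω / q ω) ^ α ∂μ with hIdef
    rcases le_or_gt I 0 with h | h
    · exact h.trans (Real.exp_pos _).le
    · have hlog : Real.log I ≤ (α - 1) * ρ := by
        exact (inv_mul_le_iff₀ hα1).mp hρ
      calc I = Real.exp (Real.log I) := (Real.exp_log h).symm
        _ ≤ Real.exp ((α - 1) * ρ) := Real.exp_le_exp.mpr hlog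
  calc ∫ ω, max (p ω - Real.exp ε * q ω) 0 ∂μ
      ≤ K * ∫ ω, q ω * (p ω / q ω) ^ α ∂μ := hmono
    _ ≤ K * Real.exp ((α - 1) * ρ) := by
        exact mul_le_mul_of_nonneg_left hI hKpos.le
    _ = (α - 1)⁻¹ * Real.exp ((α - 1) * (ρ - ε)) * (1 - 1 / α) ^ α := by
        rw [hKdef]
        rw [show (α-1)⁻¹ * Real.exp (-(α - 1) * ε) * (1 - 1/α) ^ α * Real.exp ((α-1)*ρ)
          = (α-1)⁻¹ * (Real.exp (-(α - 1) * ε) * Real.exp ((α-1)*ρ)) * (1 - 1/α) ^ α by ring,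
          ← Real.exp_add]
        ring_nf
end

section
/- For any ε > 0, the hockey-stick divergence of the random allocation mixture satisfies H_{e^ε}(P̄ ‖ Q^{⊗t}) = E_{V∼Q^{⊗t}}[ ((1/t) Σ_{i=1}^t P(V_i)/Q(V_i)) − e^ε ]₊, where P̄ := (1/t) Σ_{i=1}^t Q^{⊗(i−1)} × P × Q^{⊗(t−i)}. -/
open MeasureTheory Finset

/-- Hockey-stick divergence of the allocation mixture against the product:
`H_{e^ε}(P̄ ‖ Q^{⊗t}) = E_{V∼Q^{⊗t}}[(1/t)Σ p(V_i)/q(V_i) − e^ε]₊`. -/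
theorem allocation_hockey_stick {Ω : Type*} [MeasurableSpace Ω] (μ : Measure Ω) [SigmaFinite μ]
    (t : ℕ) (ht : 1 ≤ t) (p q : Ω → ℝ) (hp : ∀ ω, 0 ≤ p ω) (hq : ∀ ω, 0 < q ω)
    (hp1 : ∫ ω, p ω ∂μ = 1) (hq1 : ∫ ω, q ω ∂μ = 1) (ε : ℝ) (hε : 0 < ε) :
    ∫ v, max (((1 / (t : ℝ)) * ∑ i, p (v i) * ∏ j ∈ Finset.univ.erase i, q (v j))
          - Real.exp ε * ∏ j, q (v j)) 0 ∂(Measure.pi fun _ : Fin t => μ)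
      = ∫ v, (∏ j, q (v j)) *
          max ((1 / (t : ℝ)) * (∑ i, p (v i) / q (v i)) - Real.exp ε) 0
          ∂(Measure.pi fun _ : Fin t => μ) := by
  refine integral_congr_ae (Filter.Eventually.of_forall fun v => ?_)
  dsimp only
  have hQ : (0:ℝ) ≤ ∏ j, q (v j) := Finset.prod_nonneg fun j _ => (hq (v j)).le
  rw [mul_max_of_nonneg _ _ hQ, mul_zero]
  congr 1
  rw [mul_sub, mul_comm (∏ j, q (v j)) (Real.exp ε)]
  congr 1
  rw [mul_comm (∏ j, q (v j)), mul_assoc]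
  congr 1
  rw [Finset.sum_mul]
  refine Finset.sum_congr rfl fun i _ => ?_
  rw [← Finset.mul_prod_erase Finset.univ (fun j => q (v j)) (Finset.mem_univ i)]
  field_simp [(hq (v i)).ne']
end

section
/- Exact Rényi divergence of the allocation mixture: for integers t ≥ 1 and α ≥ 2 and distributions P, Q with P̄ := (1/t) Σ_{i=1}^t Q^{⊗(i−1)} × P × Q^{⊗(t−i)}, one has exp((α−1) D_α(P̄ ‖ Q^{⊗t})) = (1/t^α) Σ over nonnegative integers i₁,…,i_t summing to α of the multinomial coefficient (α choose i₁,…,i_t) times Π_{k: i_k ≥ 1} E_{ω∼Q}[(P(ω)/Q(ω))^{i_k}]. -/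
open MeasureTheory Finset

/-- Exact Rényi divergence of the allocation mixture: `exp((α−1)·D_α(P̄‖Q^{⊗t}))` equals
`(1/t^α) Σ_{i₁+⋯+i_t=α} (α choose i₁,…,i_t) Π_{k : i_k ≥ 1} E_Q[(P/Q)^{i_k}]`. -/
theorem allocation_renyi_exact {Ω : Type*} [MeasurableSpace Ω] (μ : Measure Ω) [SigmaFinite μ]
    (t α : ℕ) (ht : 1 ≤ t) (hα : 2 ≤ α) (p q : Ω → ℝ)
    (hp : ∀ ω, 0 < p ω) (hq : ∀ ω, 0 < q ω)
    (hp1 : ∫ ω, p ω ∂μ = 1) (hq1 : ∫ ω, q ω ∂μ = 1)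
    (hmom : ∀ m ≤ α, Integrable (fun ω => q ω * (p ω / q ω) ^ m) μ) :
    Real.exp (((α : ℝ) - 1) *
        (((α : ℝ) - 1)⁻¹ * Real.log (∫ v, (∏ j, q (v j)) *
          ((((1 / (t : ℝ)) * ∑ i, p (v i) * ∏ j ∈ Finset.univ.erase i, q (v j))
              / ∏ j, q (v j)) ^ α) ∂(Measure.pi fun _ : Fin t => μ))))
      = (1 / (t : ℝ) ^ α) * ∑ f ∈ Finset.Nat.antidiagonalTuple t α,
          (Nat.multinomial Finset.univ f : ℝ) *
            ∏ k ∈ Finset.univ.filter (fun k => 1 ≤ f k),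
              ∫ ω, q ω * (p ω / q ω) ^ (f k) ∂μ := by
  letI : MeasureSpace Ω := ⟨μ⟩
  have hμvol : μ = (volume : Measure Ω) := rfl
  -- the measure is nonzero
  have hμne : μ ≠ 0 := by
    intro h
    rw [h] at hp1
    simp at hp1
  -- positivity of each moment integral
  have hmompos : ∀ m ≤ α, 0 < ∫ ω, q ω * (p ω / q ω) ^ m ∂μ := by
    intro m hm
    rw [integral_pos_iff_support_of_nonneg]
    · have : Function.support (fun ω => q ω * (p ω / q ω) ^ m) = Set.univ := by
        ext ω
        simp only [Function.mem_support, Set.mem_univ, iff_true]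
        have h1 := hp ω
        have h2 := hq ω
        positivity
      rw [this]
      simpa [Measure.measure_univ_pos] using hμne
    · intro ω
      have := (hp ω).le
      have := (hq ω).le
      positivity
    · exact hmom m hm
  -- pointwise rewriting of the integrand
  have hptwise : ∀ v : Fin t → Ω,
      (∏ j, q (v j)) *
          ((((1 / (t : ℝ)) * ∑ i, p (v i) * ∏ j ∈ Finset.univ.erase i, q (v j))
              / ∏ j, q (v j)) ^ α)
        = (1 / (t : ℝ)) ^ α * ∑ f ∈ Finset.Nat.antidiagonalTuple t α,
            (Nat.multinomial Finset.univ f : ℝ) *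
              ∏ i, (q (v i) * (p (v i) / q (v i)) ^ (f i)) := by
    intro v
    have hqprod : (0 : ℝ) < ∏ j, q (v j) := Finset.prod_pos fun j _ => hq (v j)
    have hsum : (∑ i, p (v i) * ∏ j ∈ Finset.univ.erase i, q (v j))
        = (∏ j, q (v j)) * ∑ i, p (v i) / q (v i) := by
      rw [Finset.mul_sum]
      refine Finset.sum_congr rfl fun i _ => ?_
      rw [← Finset.mul_prod_erase Finset.univ (fun j => q (v j)) (Finset.mem_univ i)]
      field_simp [(hq (v i)).ne']
    rw [hsum]
    rw [show ((1 / (t : ℝ)) * ((∏ j, q (v j)) * ∑ i, p (v i) / q (v i))) / ∏ j, q (v j)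
        = (1 / (t : ℝ)) * ∑ i, p (v i) / q (v i) by
      field_simp]
    rw [mul_pow, Finset.sum_pow_eq_sum_piAntidiag,
      Finset.piAntidiag_univ_fin_eq_antidiagonalTuple, Finset.mul_sum, Finset.mul_sum]
    conv_rhs => rw [Finset.mul_sum]
    refine Finset.sum_congr rfl fun f _ => ?_
    rw [Finset.prod_mul_distrib]
    ring
  -- integrability of each product term
  have hint : ∀ f ∈ Finset.Nat.antidiagonalTuple t α,
      Integrable (fun v : Fin t → Ω => ∏ i, (q (v i) * (p (v i) / q (v i)) ^ (f i)))
        (Measure.pi fun _ : Fin t => μ) := by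
    intro f hf
    have hfle : ∀ i, f i ≤ α := by
      intro i
      rw [Finset.Nat.mem_antidiagonalTuple] at hf
      calc f i ≤ ∑ j, f j := Finset.single_le_sum (fun j _ => Nat.zero_le _) (Finset.mem_univ i)
        _ = α := hf
    exact MeasureTheory.Integrable.fintype_prod (f := fun i ω => q ω * (p ω / q ω) ^ (f i))
      fun i => hmom (f i) (hfle i)
  -- the main integral computation
  have hX : (∫ v, (∏ j, q (v j)) *
          ((((1 / (t : ℝ)) * ∑ i, p (v i) * ∏ j ∈ Finset.univ.erase i, q (v j))
              / ∏ j, q (v j)) ^ α) ∂(Measure.pi fun _ : Fin t => μ))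
      = (1 / (t : ℝ) ^ α) * ∑ f ∈ Finset.Nat.antidiagonalTuple t α,
          (Nat.multinomial Finset.univ f : ℝ) *
            ∏ k ∈ Finset.univ.filter (fun k => 1 ≤ f k),
              ∫ ω, q ω * (p ω / q ω) ^ (f k) ∂μ := by
    rw [integral_congr_ae (Filter.Eventually.of_forall hptwise), integral_const_mul,
      integral_finset_sum _ (fun f hf => ((hint f hf).const_mul _)), one_div, inv_pow, ← one_div]
    congr 1
    refine Finset.sum_congr rfl fun f hf => ?_
    rw [integral_const_mul]
    congr 1
    have : (∫ v, ∏ i, (q (v i) * (p (v i) / q (v i)) ^ (f i)) ∂(Measure.pi fun _ : Fin t => μ))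
        = ∏ i, ∫ ω, q ω * (p ω / q ω) ^ (f i) ∂μ := by
      rw [hμvol]
      exact MeasureTheory.integral_fintype_prod_eq_prod
        (fun i ω => q ω * (p ω / q ω) ^ (f i))
    rw [this, ← Finset.prod_filter_mul_prod_filter_not Finset.univ (fun k => 1 ≤ f k)]
    have h1 : ∏ k ∈ Finset.univ.filter (fun k => ¬ 1 ≤ f k),
        (∫ ω, q ω * (p ω / q ω) ^ (f k) ∂μ) = 1 := by
      refine Finset.prod_eq_one fun k hk => ?_
      rw [Finset.mem_filter] at hk
      have : f k = 0 := by omega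
      rw [this]
      simpa using hq1
    rw [h1, mul_one]
  -- positivity of the right-hand side
  have hRpos : 0 < (1 / (t : ℝ) ^ α) * ∑ f ∈ Finset.Nat.antidiagonalTuple t α,
          (Nat.multinomial Finset.univ f : ℝ) *
            ∏ k ∈ Finset.univ.filter (fun k => 1 ≤ f k),
              ∫ ω, q ω * (p ω / q ω) ^ (f k) ∂μ := by
    have ht0 : (0 : ℝ) < (t : ℝ) ^ α := by
      have : (0 : ℝ) < (t : ℝ) := by exact_mod_cast ht
      positivity
    refine mul_pos (by positivity) (Finset.sum_pos (fun f hf => ?_) ?_)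
    · refine mul_pos ?_ (Finset.prod_pos fun k hk => ?_)
      · exact_mod_cast Nat.multinomial_pos _ _
      · refine hmompos (f k) ?_
        rw [Finset.Nat.mem_antidiagonalTuple] at hf
        calc f k ≤ ∑ j, f j := Finset.single_le_sum (fun j _ => Nat.zero_le _) (Finset.mem_univ k)
          _ = α := hf
    · refine ⟨fun i => if i = ⟨0, ht⟩ then α else 0, ?_⟩
      rw [Finset.Nat.mem_antidiagonalTuple]
      simp
  rw [hX, ← mul_assoc, mul_inv_cancel₀ (by
      have : (2 : ℝ) ≤ (α : ℝ) := by exact_mod_cast hα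
      intro h
      nlinarith), one_mul, Real.exp_log hRpos]
end

section
/- Rényi divergence of the Gaussian allocation mixture: for integers t ≥ 1 and α ≥ 2 and σ > 0, with P̄ the uniform mixture over i ∈ [t] of t-dimensional Gaussians N(e_i, σ²I_t) and Q = N(0, σ²I_t), one has D_α(P̄‖Q) = (1/(α−1)) ln( (1/t^α) Σ_{i₁+⋯+i_t = α, i_k ≥ 0} (α choose i₁,…,i_t) exp(Σ_k i_k(i_k−1)/(2σ²)) ). -/
open MeasureTheory Finset Real

/-- Gaussian density with mean `m` and standard deviation `σ`. -/
noncomputable def gaussDensity (m σ x : ℝ) : ℝ :=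
  (1 / (Real.sqrt (2 * Real.pi) * σ)) * Real.exp (-(x - m) ^ 2 / (2 * σ ^ 2))

noncomputable def gaussRatio (σ x : ℝ) : ℝ := Real.exp ((2 * x - 1) / (2 * σ ^ 2))

lemma gaussDensity_pos (m : ℝ) {σ : ℝ} (hσ : 0 < σ) (x : ℝ) : 0 < gaussDensity m σ x := by
  unfold gaussDensity
  positivity

lemma gaussDensity_eq_pdf (m : ℝ) {σ : ℝ} (hσ : 0 < σ) (x : ℝ) :
    gaussDensity m σ x = ProbabilityTheory.gaussianPDFReal m ⟨σ ^ 2, sq_nonneg σ⟩ x := by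
  unfold gaussDensity ProbabilityTheory.gaussianPDFReal
  have : Real.sqrt (2 * Real.pi * σ ^ 2) = Real.sqrt (2 * Real.pi) * σ := by
    rw [Real.sqrt_mul (by positivity), Real.sqrt_sq hσ.le]
  change _ = (√(2 * π * σ ^ 2))⁻¹ * rexp (-(x - m) ^ 2 / (2 * σ ^ 2))
  simp [this, one_div]

lemma integral_gaussDensity (m : ℝ) {σ : ℝ} (hσ : 0 < σ) :
    ∫ x, gaussDensity m σ x = 1 := by
  simp_rw [gaussDensity_eq_pdf m hσ]
  exact ProbabilityTheory.integral_gaussianPDFReal_eq_one m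
    (fun h => (pow_pos hσ 2).ne' (congrArg Subtype.val h))

lemma integrable_gaussDensity (m : ℝ) {σ : ℝ} (hσ : 0 < σ) :
    Integrable (gaussDensity m σ) := by
  have := ProbabilityTheory.integrable_gaussianPDFReal m ⟨σ ^ 2, sq_nonneg σ⟩
  exact this.congr (Filter.Eventually.of_forall fun x => (gaussDensity_eq_pdf m hσ x).symm)

lemma mul_ratio_pow (n : ℕ) {σ : ℝ} (hσ : 0 < σ) (x : ℝ) :
    gaussDensity 0 σ x * gaussRatio σ x ^ n
      = Real.exp ((n : ℝ) * ((n : ℝ) - 1) / (2 * σ ^ 2)) * gaussDensity (n : ℝ) σ x := by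
  unfold gaussDensity gaussRatio
  rw [← Real.exp_nat_mul, mul_assoc, ← Real.exp_add, mul_comm (Real.exp _),
    mul_assoc, ← Real.exp_add]
  congr 2
  have h : (σ:ℝ)^2 ≠ 0 := by positivity
  field_simp
  ring

lemma integral_mul_ratio_pow (n : ℕ) {σ : ℝ} (hσ : 0 < σ) :
    ∫ x, gaussDensity 0 σ x * gaussRatio σ x ^ n
      = Real.exp ((n : ℝ) * ((n : ℝ) - 1) / (2 * σ ^ 2)) := by
  simp_rw [mul_ratio_pow n hσ]
  rw [MeasureTheory.integral_const_mul, integral_gaussDensity _ hσ, mul_one]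

lemma integrable_mul_ratio_pow (n : ℕ) {σ : ℝ} (hσ : 0 < σ) :
    Integrable (fun x => gaussDensity 0 σ x * gaussRatio σ x ^ n) := by
  simp_rw [mul_ratio_pow n hσ]
  exact (integrable_gaussDensity _ hσ).const_mul _

lemma gaussDensity_one_eq {σ : ℝ} (hσ : 0 < σ) (x : ℝ) :
    gaussDensity 1 σ x = gaussRatio σ x * gaussDensity 0 σ x := by
  unfold gaussDensity gaussRatio
  rw [mul_comm (Real.exp _), mul_assoc, ← Real.exp_add]
  congr 2
  have h : (σ:ℝ)^2 ≠ 0 := by positivity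
  field_simp
  ring

lemma integrand_eq (t α : ℕ) {σ : ℝ} (hσ : 0 < σ) (v : Fin t → ℝ) :
    (∏ j, gaussDensity 0 σ (v j)) *
      ((((1 / (t : ℝ)) * ∑ i, ∏ j, gaussDensity (if j = i then 1 else 0) σ (v j)) /
          ∏ j, gaussDensity 0 σ (v j)) ^ α)
    = (1 / (t : ℝ)) ^ α * ∑ f ∈ Finset.Nat.antidiagonalTuple t α,
        (Nat.multinomial Finset.univ f : ℝ) *
          ∏ j, (gaussDensity 0 σ (v j) * gaussRatio σ (v j) ^ f j) := by
  have hQ : 0 < ∏ j, gaussDensity 0 σ (v j) :=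
    Finset.prod_pos fun j _ => gaussDensity_pos 0 hσ (v j)
  have hnum : ∀ i : Fin t, ∏ j, gaussDensity (if j = i then 1 else 0) σ (v j)
      = gaussRatio σ (v i) * ∏ j, gaussDensity 0 σ (v j) := by
    intro i
    have h1 : ∀ j : Fin t, gaussDensity (if j = i then 1 else 0) σ (v j)
        = (if j = i then gaussRatio σ (v j) else 1) * gaussDensity 0 σ (v j) := by
      intro j
      by_cases h : j = i
      · simp only [h, if_pos rfl]; exact gaussDensity_one_eq hσ (v i)
      · simp [h]
    simp_rw [h1, Finset.prod_mul_distrib]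
    congr 1
    simp
  simp_rw [hnum]
  rw [← Finset.sum_mul, ← mul_assoc, mul_div_assoc,
    div_self hQ.ne', mul_one, mul_pow,
    Finset.sum_pow_eq_sum_piAntidiag, Finset.piAntidiag_univ_fin_eq_antidiagonalTuple,
    mul_left_comm]
  congr 1
  rw [Finset.mul_sum]
  refine Finset.sum_congr rfl fun f _ => ?_
  rw [Finset.prod_mul_distrib]
  ring

/-- Rényi divergence of the Gaussian allocation mixture: with `P̄` the uniform mixture of
`N(e_i, σ²I_t)` over `i ∈ [t]` and `Q = N(0, σ²I_t)`,
`D_α(P̄‖Q) = (1/(α−1)) ln((1/t^α) Σ_{i₁+⋯+i_t=α} (α choose i₁,…,i_t) exp(Σ_k i_k(i_k−1)/(2σ²)))`. -/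
theorem gaussian_allocation_renyi (t α : ℕ) (ht : 1 ≤ t) (hα : 2 ≤ α) (σ : ℝ) (hσ : 0 < σ) :
    ((α : ℝ) - 1)⁻¹ * Real.log (∫ v : Fin t → ℝ,
        (∏ j, gaussDensity 0 σ (v j)) *
          ((((1 / (t : ℝ)) * ∑ i, ∏ j, gaussDensity (if j = i then 1 else 0) σ (v j)) /
              ∏ j, gaussDensity 0 σ (v j)) ^ α)
        ∂(Measure.pi fun _ : Fin t => (volume : Measure ℝ)))
      = ((α : ℝ) - 1)⁻¹ * Real.log ((1 / (t : ℝ) ^ α) *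
          ∑ f ∈ Finset.Nat.antidiagonalTuple t α,
            (Nat.multinomial Finset.univ f : ℝ) *
              Real.exp (∑ k, (f k : ℝ) * ((f k : ℝ) - 1) / (2 * σ ^ 2))) := by
  rw [← MeasureTheory.volume_pi]
  congr 2
  simp_rw [integrand_eq t α hσ]
  rw [MeasureTheory.integral_const_mul,
    MeasureTheory.integral_finset_sum _ (fun f _ =>
      (Integrable.fintype_prod (fun j => integrable_mul_ratio_pow (f j) hσ)).const_mul _)]
  rw [div_pow, one_pow]
  congr 1
  refine Finset.sum_congr rfl fun f _ => ?_
  rw [MeasureTheory.integral_const_mul]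
  congr 1
  rw [MeasureTheory.integral_fintype_prod_volume_eq_prod
      (fun j x => gaussDensity 0 σ x * gaussRatio σ x ^ f j)]
  simp_rw [integral_mul_ratio_pow _ hσ]
  rw [← Real.exp_sum]
end

section
/- The privacy loss of the allocation mixture against the product satisfies: for a view v ∈ Ωᵗ with prefix v^i = (y₁,…,y_i), ln(P̄(v^i)/Q^{⊗i}(v^i)) = ln( (1/t)·( t − i + Σ_{j=1}^i P(y_j)/Q(y_j) ) ), where P̄(v^i) denotes the marginal of P̄ on the first i coordinates. -/
open MeasureTheory Finset

/-- Privacy loss of the prefix marginal of the allocation mixture: for a prefix view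
`v = (y₁,…,y_i)`, the marginal of `P̄` on the first `i` coordinates is
`(1/t)(Σ_{m<i} p(y_m)Π_{j≠m}q(y_j) + (t−i)Π_j q(y_j))`, and
`ln(P̄(v)/Q^{⊗i}(v)) = ln((1/t)(t − i + Σ_j p(y_j)/q(y_j)))`. -/
theorem allocation_prefix_loss {Ω : Type*} (t i : ℕ) (ht : 1 ≤ t) (hit : i ≤ t)
    (p q : Ω → ℝ) (hp : ∀ ω, 0 < p ω) (hq : ∀ ω, 0 < q ω) (v : Fin i → Ω) :
    Real.log (((1 / (t : ℝ)) * ∑ m : Fin t,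
        (if h : (m : ℕ) < i then
            p (v ⟨m, h⟩) * ∏ j ∈ Finset.univ.erase (⟨m, h⟩ : Fin i), q (v j)
          else ∏ j, q (v j))) / ∏ j, q (v j))
      = Real.log ((1 / (t : ℝ)) * ((t : ℝ) - (i : ℝ) + ∑ j, p (v j) / q (v j))) := by
  have hq0 : ∀ j : Fin i, q (v j) ≠ 0 := fun j => (hq _).ne'
  have hProd : (∏ j, q (v j)) ≠ 0 := Finset.prod_ne_zero_iff.2 fun j _ => hq0 j
  have step : ∀ m : Fin t,
      (if h : (m : ℕ) < i then
          p (v ⟨m, h⟩) * ∏ j ∈ Finset.univ.erase (⟨m, h⟩ : Fin i), q (v j)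
        else ∏ j, q (v j))
      = (if h : (m : ℕ) < i then p (v ⟨m, h⟩) / q (v ⟨m, h⟩) else 1) * ∏ j, q (v j) := by
    intro m
    by_cases h : (m : ℕ) < i
    · simp only [h, dif_pos]
      rw [← Finset.mul_prod_erase Finset.univ (fun j => q (v j)) (Finset.mem_univ (⟨m, h⟩ : Fin i))]
      field_simp
      rw [mul_div_cancel_right₀ _ (hq0 _)]
    · simp [h]
  have hsum : (∑ m : Fin t, (if h : (m : ℕ) < i then p (v ⟨m, h⟩) / q (v ⟨m, h⟩) else 1))
      = (t : ℝ) - (i : ℝ) + ∑ j, p (v j) / q (v j) := by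
    rw [Fin.sum_univ_eq_sum_range (fun m => if h : m < i then p (v ⟨m, h⟩) / q (v ⟨m, h⟩) else 1) t]
    rw [Finset.range_eq_Ico, ← Finset.sum_Ico_consecutive _ (Nat.zero_le i) hit]
    have h1 : ∑ m ∈ Finset.Ico 0 i, (if h : m < i then p (v ⟨m, h⟩) / q (v ⟨m, h⟩) else 1)
        = ∑ j, p (v j) / q (v j) := by
      rw [← Finset.range_eq_Ico,
        ← Fin.sum_univ_eq_sum_range (fun m => if h : m < i then p (v ⟨m, h⟩) / q (v ⟨m, h⟩) else 1) i]
      exact Finset.sum_congr rfl fun j _ => by simp [j.isLt]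
    have h2 : ∑ m ∈ Finset.Ico i t, (if h : m < i then p (v ⟨m, h⟩) / q (v ⟨m, h⟩) else 1)
        = (t : ℝ) - (i : ℝ) := by
      rw [Finset.sum_dite_of_false (fun m hm => not_lt.2 (Finset.mem_Ico.1 hm).1)]
      simp [Nat.cast_sub hit]
    rw [h1, h2]; ring
  congr 1
  rw [Finset.sum_congr rfl fun m _ => step m, ← Finset.sum_mul, hsum]
  field_simp
end

section
/- If a mechanism's output distributions satisfy sup over measurable sets C of (P(C) − e^ε Q(C)) ≤ δ (i.e., (ε,δ)-indistinguishability), then the probability under P that the log-likelihood ratio exceeds 2ε is at most 2δ/(1 − e^{−ε}). -/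
open MeasureTheory

/-- If `P` and `Q` are `(ε,δ)`-indistinguishable (in both directions), then the probability
under `P` that the log-likelihood ratio exceeds `2ε` is at most `2δ/(1 − e^{−ε})`. -/
theorem dp_implies_loss_tail {Ω : Type*} [MeasurableSpace Ω] (μ : Measure Ω)
    (p q : Ω → ℝ) (ε δ : ℝ) (hε : 0 < ε) (hδ0 : 0 ≤ δ) (hδ1 : δ ≤ 1)
    (hp : ∀ ω, 0 < p ω) (hq : ∀ ω, 0 < q ω)
    (hpm : Measurable p) (hqm : Measurable q)
    (hp1 : ∫ ω, p ω ∂μ = 1) (hq1 : ∫ ω, q ω ∂μ = 1)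
    (hintp : Integrable p μ) (hintq : Integrable q μ)
    (hPQ : ∀ C : Set Ω, MeasurableSet C →
      (∫ ω in C, p ω ∂μ) - Real.exp ε * ∫ ω in C, q ω ∂μ ≤ δ)
    (hQP : ∀ C : Set Ω, MeasurableSet C →
      (∫ ω in C, q ω ∂μ) - Real.exp ε * ∫ ω in C, p ω ∂μ ≤ δ) :
    ∫ ω in {ω | 2 * ε < Real.log (p ω / q ω)}, p ω ∂μ ≤ 2 * δ / (1 - Real.exp (-ε)) := by
  set A := {ω | 2 * ε < Real.log (p ω / q ω)} with hA
  have hAm : MeasurableSet A := by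
    have hm : Measurable fun ω => Real.log (p ω / q ω) :=
      (hpm.div hqm).log
    exact measurableSet_lt measurable_const hm
  have key := hPQ A hAm
  have hmono : ∫ ω in A, q ω ∂μ ≤ Real.exp (-(2 * ε)) * ∫ ω in A, p ω ∂μ := by
    rw [← integral_const_mul]
    refine setIntegral_mono_on hintq.integrableOn (hintp.integrableOn.const_mul _) hAm ?_
    intro ω hω
    have hω' : 2 * ε < Real.log (p ω / q ω) := hω
    have hpq : Real.exp (2 * ε) < p ω / q ω := by
      have h := Real.exp_lt_exp.mpr hω'
      rwa [Real.exp_log (div_pos (hp ω) (hq ω))] at h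
    have h1 : Real.exp (2 * ε) * q ω < p ω := (lt_div_iff₀ (hq ω)).mp hpq
    have h2 : Real.exp (-(2 * ε)) * Real.exp (2 * ε) = 1 := by
      rw [← Real.exp_add]; simp
    nlinarith [Real.exp_pos (-(2 * ε)), Real.exp_pos (2 * ε), (hq ω).le]
  have hx0 : 0 ≤ ∫ ω in A, p ω ∂μ :=
    setIntegral_nonneg hAm fun ω _ => (hp ω).le
  have hee : Real.exp ε * Real.exp (-(2 * ε)) = Real.exp (-ε) := by
    rw [← Real.exp_add]; ring_nf
  have he1 : Real.exp (-ε) < 1 := Real.exp_lt_one_iff.mpr (by linarith)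
  rw [le_div_iff₀ (by linarith : (0:ℝ) < 1 - Real.exp (-ε))]
  nlinarith [Real.exp_pos ε, Real.exp_pos (-ε)]
end
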